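/- Let e_z, e_x, e_y be real numbers such that q_i := (1+e_z+e_x+e_y)/4, q_z := (1+e_z−e_x−e_y)/4, q_x := (1−e_z+e_x−e_y)/4, q_y := (1−e_z−e_x+e_y)/4 are all nonnegative, let A, B ∈ SO(3), and let R = B·diag(e_z,e_x,e_y)·A. Set H := −(q_i log₂ q_i + q_z log₂ q_z + q_x log₂ q_x + q_y log₂ q_y), and for a real 3×3 matrix M define K(M) := 1 − H + h₂((1+‖M e₁‖)/2) − h₂((1+M₁₁)/2). Then K(O_B·R·O_A) ≤ 1 − H for all O_A, O_B ∈ SO(3), and equality holds for O_A = Aᵀ and O_B = Bᵀ; hence the supremum of K(O_B·R·O_A) over O_A, O_B ∈ SO(3) equals 1 − H. -/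
import Mathlib

/-- Binary entropy function (base-2 logarithm), with the convention `0 * log 0 = 0`. -/
noncomputable def h2 (p : ℝ) : ℝ := -(p * Real.logb 2 p) - (1 - p) * Real.logb 2 (1 - p)

/-- `M` is a real 3×3 special orthogonal matrix. -/
def SO3 (M : Matrix (Fin 3) (Fin 3) ℝ) : Prop := M.transpose * M = 1 ∧ M.det = 1

/-- Euclidean norm of the first column of a 3×3 real matrix. -/
noncomputable def colNorm3 (M : Matrix (Fin 3) (Fin 3) ℝ) : ℝ :=
  Real.sqrt ((M 0 0) ^ 2 + (M 1 0) ^ 2 + (M 2 0) ^ 2)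

lemma h2_eq (p : ℝ) : h2 p = Real.binEntropy p / Real.log 2 := by
  simp [h2, Real.binEntropy, Real.logb]; ring

lemma h2_one_sub (p : ℝ) : h2 (1 - p) = h2 p := by
  rw [h2_eq, h2_eq, Real.binEntropy_one_sub]

lemma h2_anti {a b : ℝ} (ha : (2:ℝ)⁻¹ ≤ a) (hab : a ≤ b) (hb : b ≤ 1) : h2 b ≤ h2 a := by
  rw [h2_eq, h2_eq]
  have hl : (0:ℝ) < Real.log 2 := Real.log_pos (by norm_num)
  have h := Real.binEntropy_strictAntiOn.antitoneOn (Set.mem_Icc.mpr ⟨ha, hab.trans hb⟩)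
    (Set.mem_Icc.mpr ⟨ha.trans hab, hb⟩) hab
  exact div_le_div_of_nonneg_right h hl.le

lemma key_ineq {m n : ℝ} (hmn : |m| ≤ n) (hn : n ≤ 1) :
    h2 ((1 + n) / 2) ≤ h2 ((1 + m) / 2) := by
  rcases le_total 0 m with hm | hm
  · rw [abs_of_nonneg hm] at hmn
    exact h2_anti (by linarith) (by linarith) (by linarith)
  · rw [abs_of_nonpos hm] at hmn
    have : h2 ((1 + m) / 2) = h2 ((1 - m) / 2) := by
      rw [show (1 - m)/2 = 1 - (1+m)/2 by ring, h2_one_sub]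
    rw [this]
    exact h2_anti (by linarith) (by linarith) (by linarith)

lemma ortho_sum (p00 p01 p02 p10 p11 p12 p20 p21 p22 w0 w1 w2 : ℝ)
    (h00 : p00^2 + p10^2 + p20^2 = 1) (h11 : p01^2 + p11^2 + p21^2 = 1)
    (h22 : p02^2 + p12^2 + p22^2 = 1)
    (h01 : p00*p01 + p10*p11 + p20*p21 = 0)
    (h02 : p00*p02 + p10*p12 + p20*p22 = 0)
    (h12 : p01*p02 + p11*p12 + p21*p22 = 0) :
    (p00*w0 + p01*w1 + p02*w2)^2 + (p10*w0 + p11*w1 + p12*w2)^2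
      + (p20*w0 + p21*w1 + p22*w2)^2 = w0^2 + w1^2 + w2^2 := by
  linear_combination w0^2*h00 + w1^2*h11 + w2^2*h22 + 2*w0*w1*h01 + 2*w0*w2*h02 + 2*w1*w2*h12

lemma SO3.transpose {M : Matrix (Fin 3) (Fin 3) ℝ} (h : SO3 M) : SO3 M.transpose := by
  refine ⟨?_, by rw [Matrix.det_transpose]; exact h.2⟩
  rw [Matrix.transpose_transpose]; exact mul_eq_one_comm.mp h.1

lemma SO3.mul_ortho {P Q : Matrix (Fin 3) (Fin 3) ℝ} (hP : SO3 P) (hQ : SO3 Q) :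
    (P * Q).transpose * (P * Q) = 1 := by
  rw [Matrix.transpose_mul, Matrix.mul_assoc, ← Matrix.mul_assoc P.transpose, hP.1,
    Matrix.one_mul, hQ.1]

/-- Bound on the first column of `P * D * Q` for orthogonal `P, Q` and diagonal `D`. -/
lemma col_bound (P Q : Matrix (Fin 3) (Fin 3) ℝ)
    (hP : P.transpose * P = 1) (hQ : Q.transpose * Q = 1)
    (ez ex ey : ℝ) (hz : |ez| ≤ 1) (hx : |ex| ≤ 1) (hy : |ey| ≤ 1)
    (M : Matrix (Fin 3) (Fin 3) ℝ) (hM : M = P * Matrix.diagonal ![ez, ex, ey] * Q) :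
    colNorm3 M ≤ 1 ∧ |M 0 0| ≤ colNorm3 M := by
  have hPe : ∀ j k : Fin 3, P 0 j * P 0 k + P 1 j * P 1 k + P 2 j * P 2 k
      = if j = k then 1 else 0 := by
    intro j k
    have := congrFun (congrFun hP j) k
    simpa [Matrix.mul_apply, Matrix.transpose_apply, Fin.sum_univ_three,
      Matrix.one_apply] using this
  have hQ00 : Q 0 0 ^ 2 + Q 1 0 ^ 2 + Q 2 0 ^ 2 = 1 := by
    have := congrFun (congrFun hQ 0) 0
    simp [Matrix.mul_apply, Matrix.transpose_apply, Fin.sum_univ_three,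
      Matrix.one_apply] at this
    linear_combination this
  have hMe : ∀ i : Fin 3, M i 0 = P i 0 * (ez * Q 0 0) + P i 1 * (ex * Q 1 0)
      + P i 2 * (ey * Q 2 0) := by
    intro i
    rw [hM]
    simp [Matrix.mul_apply, Matrix.mul_diagonal, Fin.sum_univ_three]
    ring
  have hsum : (M 0 0)^2 + (M 1 0)^2 + (M 2 0)^2
      = (ez * Q 0 0)^2 + (ex * Q 1 0)^2 + (ey * Q 2 0)^2 := by
    rw [hMe 0, hMe 1, hMe 2]
    have e00 := hPe 0 0; have e11 := hPe 1 1; have e22 := hPe 2 2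
    have e01 := hPe 0 1; have e02 := hPe 0 2; have e12 := hPe 1 2
    simp at e00 e11 e22 e01 e02 e12
    refine ortho_sum _ _ _ _ _ _ _ _ _ _ _ _ ?_ ?_ ?_ ?_ ?_ ?_
    · linear_combination e00
    · linear_combination e11
    · linear_combination e22
    · linear_combination e01
    · linear_combination e02
    · linear_combination e12
  have hz2 : ez^2 ≤ 1 := by nlinarith [abs_nonneg ez, sq_abs ez]
  have hx2 : ex^2 ≤ 1 := by nlinarith [abs_nonneg ex, sq_abs ex]
  have hy2 : ey^2 ≤ 1 := by nlinarith [abs_nonneg ey, sq_abs ey]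
  constructor
  · rw [colNorm3]
    have hle : (M 0 0)^2 + (M 1 0)^2 + (M 2 0)^2 ≤ 1 := by
      rw [hsum]
      nlinarith [sq_nonneg (Q 0 0), sq_nonneg (Q 1 0), sq_nonneg (Q 2 0)]
    calc Real.sqrt ((M 0 0)^2 + (M 1 0)^2 + (M 2 0)^2) ≤ Real.sqrt 1 :=
          Real.sqrt_le_sqrt hle
      _ = 1 := Real.sqrt_one
  · rw [colNorm3, ← Real.sqrt_sq_eq_abs]
    exact Real.sqrt_le_sqrt (by nlinarith [sq_nonneg (M 1 0), sq_nonneg (M 2 0)])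

theorem stmt2 (ez ex ey : ℝ)
    (hqi : 0 ≤ (1 + ez + ex + ey) / 4) (hqz : 0 ≤ (1 + ez - ex - ey) / 4)
    (hqx : 0 ≤ (1 - ez + ex - ey) / 4) (hqy : 0 ≤ (1 - ez - ex + ey) / 4)
    (A B : Matrix (Fin 3) (Fin 3) ℝ) (hA : SO3 A) (hB : SO3 B)
    (R : Matrix (Fin 3) (Fin 3) ℝ)
    (hR : R = B * Matrix.diagonal ![ez, ex, ey] * A)
    (H : ℝ)
    (hH : H = -((1 + ez + ex + ey) / 4 * Real.logb 2 ((1 + ez + ex + ey) / 4)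
      + (1 + ez - ex - ey) / 4 * Real.logb 2 ((1 + ez - ex - ey) / 4)
      + (1 - ez + ex - ey) / 4 * Real.logb 2 ((1 - ez + ex - ey) / 4)
      + (1 - ez - ex + ey) / 4 * Real.logb 2 ((1 - ez - ex + ey) / 4)))
    (K : Matrix (Fin 3) (Fin 3) ℝ → ℝ)
    (hK : ∀ M, K M = 1 - H + h2 ((1 + colNorm3 M) / 2) - h2 ((1 + M 0 0) / 2)) :
    (∀ OA OB, SO3 OA → SO3 OB → K (OB * R * OA) ≤ 1 - H) ∧
    K (B.transpose * R * A.transpose) = 1 - H ∧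
    sSup {r : ℝ | ∃ OA OB, SO3 OA ∧ SO3 OB ∧ r = K (OB * R * OA)} = 1 - H := by
  have hz : |ez| ≤ 1 := abs_le.mpr ⟨by linarith, by linarith⟩
  have hx : |ex| ≤ 1 := abs_le.mpr ⟨by linarith, by linarith⟩
  have hy : |ey| ≤ 1 := abs_le.mpr ⟨by linarith, by linarith⟩
  have main : ∀ OA OB, SO3 OA → SO3 OB → K (OB * R * OA) ≤ 1 - H := by
    intro OA OB hOA hOB
    set M := OB * R * OA with hMdef
    have hM : M = (OB * B) * Matrix.diagonal ![ez, ex, ey] * (A * OA) := by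
      rw [hMdef, hR]; simp only [Matrix.mul_assoc]
    obtain ⟨h1, h2'⟩ := col_bound (OB * B) (A * OA) (hOB.mul_ortho hB)
      (hA.mul_ortho hOA) ez ex ey hz hx hy M hM
    rw [hK]
    have := key_ineq h2' h1
    linarith
  have hAAt : A * A.transpose = 1 := mul_eq_one_comm.mp hA.1
  have hDiag : B.transpose * R * A.transpose = Matrix.diagonal ![ez, ex, ey] := by
    rw [hR]
    calc B.transpose * (B * Matrix.diagonal ![ez, ex, ey] * A) * A.transpose
        = (B.transpose * B) * Matrix.diagonal ![ez, ex, ey] * (A * A.transpose) := by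
          simp only [Matrix.mul_assoc]
      _ = Matrix.diagonal ![ez, ex, ey] := by rw [hB.1, hAAt, Matrix.one_mul, Matrix.mul_one]
  have heq : K (B.transpose * R * A.transpose) = 1 - H := by
    rw [hK, hDiag]
    have h00 : (Matrix.diagonal ![ez, ex, ey]) 0 0 = ez := by simp
    have h10 : (Matrix.diagonal ![ez, ex, ey]) 1 0 = 0 := by
      simp [Matrix.diagonal_apply]
    have h20 : (Matrix.diagonal ![ez, ex, ey]) 2 0 = 0 := by
      simp [Matrix.diagonal_apply]
    have hcol : colNorm3 (Matrix.diagonal ![ez, ex, ey]) = |ez| := by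
      rw [colNorm3, h00, h10, h20]
      simp [Real.sqrt_sq_eq_abs]
    rw [hcol, h00]
    rcases le_total 0 ez with h | h
    · rw [abs_of_nonneg h]; ring
    · rw [abs_of_nonpos h,
        show (1 + -ez)/2 = 1 - (1 + ez)/2 by ring, h2_one_sub]; ring
  refine ⟨main, heq, ?_⟩
  have hmem : (1 - H) ∈ {r : ℝ | ∃ OA OB, SO3 OA ∧ SO3 OB ∧ r = K (OB * R * OA)} :=
    ⟨A.transpose, B.transpose, hA.transpose, hB.transpose, heq.symm⟩
  apply le_antisymm
  · apply csSup_le ⟨_, hmem⟩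
    rintro r ⟨OA, OB, hOA, hOB, rfl⟩
    exact main OA OB hOA hOB
  · exact le_csSup ⟨1 - H, fun r ⟨OA, OB, hOA, hOB, hr⟩ => hr ▸ main OA OB hOA hOB⟩ hmem
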